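/- arXiv:2510.25391 — 5 statements merged into one kernel-verified Lean document; each statement's English description precedes it below -/
import Mathlib

section
/- If ξ : ℝ → ℝ satisfies ξ(t + τ) - ξ(t) = ξ(t) - ξ(t - τ) for all t ∈ ℝ (where τ > 0 is fixed), then there exist functions f, g : ℝ → ℝ, each periodic with period τ, such that ξ(t) = f(t)·t + g(t) for all t. -/
theorem stmt_2 (τ : ℝ) (hτ : 0 < τ) (ξ : ℝ → ℝ)
    (h : ∀ t : ℝ, ξ (t + τ) - ξ t = ξ t - ξ (t - τ)) :
    ∃ f g : ℝ → ℝ, (∀ t, f (t + τ) = f t) ∧ (∀ t, g (t + τ) = g t) ∧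
      ∀ t, ξ t = f t * t + g t := by
  refine ⟨fun t => (ξ (t + τ) - ξ t) / τ,
    fun t => ξ t - (ξ (t + τ) - ξ t) / τ * t, ?_, ?_, ?_⟩
  · intro t
    have := h (t + τ)
    have : ξ (t + τ + τ) - ξ (t + τ) = ξ (t + τ) - ξ t := by
      simpa using this
    beta_reduce
    rw [this]
  · intro t
    have hf : ξ (t + τ + τ) - ξ (t + τ) = ξ (t + τ) - ξ t := by
      simpa using h (t + τ)
    beta_reduce
    rw [hf]
    field_simp
    ring
  · intro t
    field_simp
    ring
end

section
/- Let τ > 0 and suppose u : ℝ → ℝ is twice differentiable and satisfies the Elsgolts equation −(u(t−τ) + u(t+τ) + u''(t−τ) + u''(t+τ)) = 0 for all t. Then the function I₁(t) = cos(t)·(u'(t+τ) + u'(t−τ)) + sin(t)·(u(t+τ) + u(t−τ)) is constant. -/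
theorem stmt_6 (τ : ℝ) (hτ : 0 < τ) (u : ℝ → ℝ)
    (hu : Differentiable ℝ u) (hu' : Differentiable ℝ (deriv u))
    (helsgolts : ∀ t : ℝ,
      u (t + τ) + u (t - τ) + deriv (deriv u) (t + τ) + deriv (deriv u) (t - τ) = 0) :
    ∀ t s : ℝ,
      Real.cos t * (deriv u (t + τ) + deriv u (t - τ)) +
        Real.sin t * (u (t + τ) + u (t - τ)) =
      Real.cos s * (deriv u (s + τ) + deriv u (s - τ)) +
        Real.sin s * (u (s + τ) + u (s - τ)) := by
  set F : ℝ → ℝ := fun t =>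
    Real.cos t * (deriv u (t + τ) + deriv u (t - τ)) +
      Real.sin t * (u (t + τ) + u (t - τ)) with hF
  have key : ∀ t : ℝ, HasDerivAt F 0 t := by
    intro t
    have hp : HasDerivAt (fun x : ℝ => x + τ) 1 t := (hasDerivAt_id t).add_const τ
    have hm : HasDerivAt (fun x : ℝ => x - τ) 1 t := (hasDerivAt_id t).sub_const τ
    have h1 : HasDerivAt (fun x => u (x + τ)) (deriv u (t + τ) * 1) t :=
      ((hu (t + τ)).hasDerivAt).comp t hp
    have h2 : HasDerivAt (fun x => u (x - τ)) (deriv u (t - τ) * 1) t :=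
      ((hu (t - τ)).hasDerivAt).comp t hm
    have h3 : HasDerivAt (fun x => deriv u (x + τ)) (deriv (deriv u) (t + τ) * 1) t :=
      by have := ((hu' (t + τ)).hasDerivAt).comp t hp; exact this
    have h4 : HasDerivAt (fun x => deriv u (x - τ)) (deriv (deriv u) (t - τ) * 1) t :=
      by have := ((hu' (t - τ)).hasDerivAt).comp t hm; exact this
    have hc : HasDerivAt Real.cos (-Real.sin t) t := Real.hasDerivAt_cos t
    have hs : HasDerivAt Real.sin (Real.cos t) t := Real.hasDerivAt_sin t
    have h := (hc.mul (h3.add h4)).add (hs.mul (h1.add h2))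
    have heq := helsgolts t
    refine h.congr_deriv (Eq.symm ?_)
    simp only [Pi.add_apply]
    linear_combination (-Real.cos t) * heq
  have hconst : ∀ t s : ℝ, F t = F s := by
    intro t s
    have : F = fun _ => F 0 := by
      funext x
      exact (is_const_of_deriv_eq_zero (fun y => (key y).differentiableAt)
        (fun y => (key y).deriv) x 0)
    rw [this]
  intro t s
  exact hconst t s
end

section
/- Let τ > 0 and let q, p : ℝ → ℝ be differentiable functions satisfying the delay canonical Hamiltonian system q'(t+τ) + q'(t−τ) = p(t+τ) + p(t−τ) and p'(t+τ) + p'(t−τ) = −q(t+τ) − q(t−τ) for all t. Then I₁(t) = sin(t)·(p(t+τ) + p(t−τ)) − cos(t)·(q(t+τ) + q(t−τ)) is constant. -/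
theorem stmt_12 (τ : ℝ) (hτ : 0 < τ) (q p : ℝ → ℝ)
    (hq : Differentiable ℝ q) (hp : Differentiable ℝ p)
    (h1 : ∀ t : ℝ, deriv q (t + τ) + deriv q (t - τ) = p (t + τ) + p (t - τ))
    (h2 : ∀ t : ℝ, deriv p (t + τ) + deriv p (t - τ) = -(q (t + τ)) - q (t - τ)) :
    ∀ t s : ℝ,
      Real.sin t * (p (t + τ) + p (t - τ)) - Real.cos t * (q (t + τ) + q (t - τ)) =
      Real.sin s * (p (s + τ) + p (s - τ)) - Real.cos s * (q (s + τ) + q (s - τ)) := by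
  intro t s
  set I : ℝ → ℝ := fun t =>
    Real.sin t * (p (t + τ) + p (t - τ)) - Real.cos t * (q (t + τ) + q (t - τ)) with hI
  have key : ∀ x : ℝ, HasDerivAt I 0 x := by
    intro x
    have hshift : ∀ (f : ℝ → ℝ) (hf : Differentiable ℝ f) (c : ℝ),
        HasDerivAt (fun t => f (t + c)) (deriv f (x + c)) x := by
      intro f hf c
      have := ((hf (x + c)).hasDerivAt).comp x
        (((hasDerivAt_id x).add_const c))
      simpa [Function.comp_def] using this
    have h1x := h1 x
    have h2x := h2 x
    simp only [sub_eq_add_neg] at h1x h2x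
    have hP : HasDerivAt (fun t => p (t + τ) + p (t - τ))
        (-(q (x + τ)) - q (x - τ)) x := by
      have h := (hshift p hp τ).add (hshift p hp (-τ))
      rw [h2x] at h
      simpa [sub_eq_add_neg, Pi.add_def] using h
    have hQ : HasDerivAt (fun t => q (t + τ) + q (t - τ))
        (p (x + τ) + p (x - τ)) x := by
      have h := (hshift q hq τ).add (hshift q hq (-τ))
      rw [h1x] at h
      simpa [sub_eq_add_neg, Pi.add_def] using h
    have := ((Real.hasDerivAt_sin x).mul hP).sub ((Real.hasDerivAt_cos x).mul hQ)
    refine this.congr_deriv ?_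
    ring
  have hconst := is_const_of_deriv_eq_zero (fun x => (key x).differentiableAt)
    (fun x => (key x).deriv)
  exact hconst t s
end

section
/- Let τ > 0 and let q, p : ℝ → ℝ be differentiable functions satisfying q'(t+τ) + q'(t−τ) = p(t+τ) + p(t−τ) and p'(t+τ) + p'(t−τ) = −q(t+τ) − q(t−τ) for all t. Then I₂(t) = cos(t)·(p(t+τ) + p(t−τ)) + sin(t)·(q(t+τ) + q(t−τ)) is constant. -/
theorem stmt_13 (τ : ℝ) (hτ : 0 < τ) (q p : ℝ → ℝ)
    (hq : Differentiable ℝ q) (hp : Differentiable ℝ p)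
    (h1 : ∀ t : ℝ, deriv q (t + τ) + deriv q (t - τ) = p (t + τ) + p (t - τ))
    (h2 : ∀ t : ℝ, deriv p (t + τ) + deriv p (t - τ) = -(q (t + τ)) - q (t - τ)) :
    ∀ t s : ℝ,
      Real.cos t * (p (t + τ) + p (t - τ)) + Real.sin t * (q (t + τ) + q (t - τ)) =
      Real.cos s * (p (s + τ) + p (s - τ)) + Real.sin s * (q (s + τ) + q (s - τ)) := by
  set f : ℝ → ℝ := fun t =>
    Real.cos t * (p (t + τ) + p (t - τ)) + Real.sin t * (q (t + τ) + q (t - τ)) with hf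
  have key : ∀ t s, f t = f s := by
    have hconst : ∀ t : ℝ, HasDerivAt f 0 t := by
      intro t
      have hpP : HasDerivAt (fun t => p (t + τ) + p (t - τ))
          (deriv p (t + τ) + deriv p (t - τ)) t := by
        have h1' : HasDerivAt (fun t => p (t + τ)) (deriv p (t + τ) * 1) t :=
          ((hp (t + τ)).hasDerivAt).comp t ((hasDerivAt_id t).add_const τ)
        have h2' : HasDerivAt (fun t => p (t - τ)) (deriv p (t - τ) * 1) t :=
          ((hp (t - τ)).hasDerivAt).comp t ((hasDerivAt_id t).sub_const τ)
        have h3 := h1'.add h2'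
        simp only [mul_one] at h3
        exact h3
      have hqQ : HasDerivAt (fun t => q (t + τ) + q (t - τ))
          (deriv q (t + τ) + deriv q (t - τ)) t := by
        have h1' : HasDerivAt (fun t => q (t + τ)) (deriv q (t + τ) * 1) t :=
          ((hq (t + τ)).hasDerivAt).comp t ((hasDerivAt_id t).add_const τ)
        have h2' : HasDerivAt (fun t => q (t - τ)) (deriv q (t - τ) * 1) t :=
          ((hq (t - τ)).hasDerivAt).comp t ((hasDerivAt_id t).sub_const τ)
        have h3 := h1'.add h2'
        simp only [mul_one] at h3
        exact h3
      have hd : HasDerivAt f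
          ((-Real.sin t) * (p (t + τ) + p (t - τ)) +
            Real.cos t * (deriv p (t + τ) + deriv p (t - τ)) +
            (Real.cos t * (q (t + τ) + q (t - τ)) +
              Real.sin t * (deriv q (t + τ) + deriv q (t - τ)))) t :=
        ((Real.hasDerivAt_cos t).mul hpP).add ((Real.hasDerivAt_sin t).mul hqQ)
      have := hd
      rw [h1 t, h2 t] at this
      convert this using 1
      ring
    have : ∀ t s, f t = f s := fun t s => by
      have := is_const_of_deriv_eq_zero (f := f)
        (fun x => (hconst x).differentiableAt) (fun x => (hconst x).deriv) t s
      exact this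
    exact this
  intro t s
  exact key t s
end

section
/- Let τ > 0, and let the Hamiltonian be H(q, q⁻, p, p⁻) = p·p⁻ + q·q⁻. For differentiable q, p : ℝ → ℝ satisfying the delay canonical Hamiltonian equations q'(t+τ) + q'(t−τ) = p(t+τ) + p(t−τ) and p'(t+τ) + p'(t−τ) = −(q(t+τ) + q(t−τ)), the differential-difference relation d/dt[p(t)p(t+τ) + q(t)q(t−τ)] = Φ(t+τ) − Φ(t) holds for all t, where Φ(t) = p(t)p'(t−τ) − q(t−τ)q'(t) − q(t)p(t−τ) + q(t−τ)p(t). -/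
theorem stmt_17 (τ : ℝ) (hτ : 0 < τ) (q p : ℝ → ℝ)
    (hq : Differentiable ℝ q) (hp : Differentiable ℝ p)
    (h1 : ∀ t : ℝ, deriv q (t + τ) + deriv q (t - τ) = p (t + τ) + p (t - τ))
    (h2 : ∀ t : ℝ, deriv p (t + τ) + deriv p (t - τ) = -(q (t + τ) + q (t - τ)))
    (Φ : ℝ → ℝ)
    (hΦ : ∀ t : ℝ, Φ t = p t * deriv p (t - τ) - q (t - τ) * deriv q t
      - q t * p (t - τ) + q (t - τ) * p t) :
    ∀ t : ℝ,
      deriv (fun s => p s * p (s + τ) + q s * q (s - τ)) t = Φ (t + τ) - Φ t := by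
  intro t
  have hp1 : HasDerivAt (fun s => p (s + τ)) (deriv p (t + τ)) t := by
    simpa [Function.comp_def] using ((hp (t + τ)).hasDerivAt).comp t ((hasDerivAt_id t).add_const τ)
  have hq1 : HasDerivAt (fun s => q (s - τ)) (deriv q (t - τ)) t := by
    simpa [Function.comp_def] using ((hq (t - τ)).hasDerivAt).comp t ((hasDerivAt_id t).sub_const τ)
  have A : HasDerivAt (fun s => p s * p (s + τ) + q s * q (s - τ))
      (deriv p t * p (t + τ) + p t * deriv p (t + τ)
        + (deriv q t * q (t - τ) + q t * deriv q (t - τ))) t :=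
    ((hp t).hasDerivAt.mul hp1).add ((hq t).hasDerivAt.mul hq1)
  rw [A.deriv, hΦ, hΦ]
  have e : t + τ - τ = t := by ring
  rw [e]
  linear_combination p t * h2 t + q t * h1 t
end
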